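/- Shearer-based leakage reduction: let A = (A₁,…,A_k) be uniformly distributed on {0,1}^k and p_{AB} a joint distribution with B a finite random variable. Then there exists a (k−1)-element subset S ⊂ {1,…,k} such that I(A_S; B) ≤ ((k−1)/k)·I(A;B), where A_S is the subsequence of bits indexed by S. -/

import Mathlib

set_option linter.unusedSectionVars false

open Finset

section Shearer
variable {B : Type*} [Fintype B] {k : ℕ}

/-- mask a boolean tuple to a subset -/
def msk (S : Finset (Fin k)) (x : Fin k → Bool) : Fin k → Bool :=
  fun i => if i ∈ S then x i else false

lemma msk_msk (S T : Finset (Fin k)) (x : Fin k → Bool) :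
    msk S (msk T x) = msk (S ∩ T) x := by
  funext i
  by_cases h1 : i ∈ S <;> by_cases h2 : i ∈ T <;> simp [msk, h1, h2]

lemma msk_msk_of_subset {S T : Finset (Fin k)} (h : S ⊆ T) (x : Fin k → Bool) :
    msk S (msk T x) = msk S x := by
  rw [msk_msk, Finset.inter_eq_left.mpr h]

lemma msk_eq_self_iff (S : Finset (Fin k)) (x : Fin k → Bool) :
    msk S x = x ↔ ∀ i ∉ S, x i = false := by
  constructor
  · intro h i hi
    rw [← congrFun h i]
    simp [msk, hi]
  · intro h
    funext i
    by_cases hi : i ∈ S <;> simp [msk, hi, h]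

lemma msk_update_notMem {S : Finset (Fin k)} {i : Fin k} (hi : i ∉ S)
    (x : Fin k → Bool) (v : Bool) : msk S (Function.update x i v) = msk S x := by
  funext j
  by_cases hj : j ∈ S
  · have : j ≠ i := fun h => hi (h ▸ hj)
    simp [msk, hj, Function.update_of_ne this]
  · simp [msk, hj]

lemma msk_update_mem {S : Finset (Fin k)} {i : Fin k} (hi : i ∈ S)
    (x : Fin k → Bool) (v : Bool) :
    msk S (Function.update x i v) = Function.update (msk S x) i v := by
  funext j
  by_cases hj : j = i
  · subst hj; simp [msk, hi]
  · simp [msk, Function.update_of_ne hj]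

end Shearer

section Shearer2
variable {B : Type*} [Fintype B] {k : ℕ}

/-- pushforward of `p` under the mask -/
def Qm (p : (Fin k → Bool) → B → ℝ) (S : Finset (Fin k)) (y : Fin k → Bool) (b : B) : ℝ :=
  ∑ x, if msk S x = y then p x b else 0

/-- negentropy of the pushforward -/
noncomputable def LL (p : (Fin k → Bool) → B → ℝ) (S : Finset (Fin k)) : ℝ :=
  ∑ y, ∑ b, Qm p S y b * Real.logb 2 (Qm p S y b)

lemma sum_fiber (p : (Fin k → Bool) → B → ℝ) (S : Finset (Fin k)) (b : B)
    (g : (Fin k → Bool) → ℝ) :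
    ∑ y, Qm p S y b * g y = ∑ x, p x b * g (msk S x) := by
  unfold Qm
  simp only [Finset.sum_mul]
  rw [Finset.sum_comm]
  refine Finset.sum_congr rfl fun x _ => ?_
  rw [Finset.sum_congr rfl (g := fun y => if msk S x = y then p x b * g y else 0)
    (fun y _ => by split <;> simp_all)]
  simp


lemma Qm_nonneg {p : (Fin k → Bool) → B → ℝ} (hp : ∀ x b, 0 ≤ p x b)
    (S : Finset (Fin k)) (y : Fin k → Bool) (b : B) : 0 ≤ Qm p S y b :=
  Finset.sum_nonneg fun x _ => by split <;> simp [hp x b]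

lemma le_Qm {p : (Fin k → Bool) → B → ℝ} (hp : ∀ x b, 0 ≤ p x b)
    (S : Finset (Fin k)) (x : Fin k → Bool) (b : B) : p x b ≤ Qm p S (msk S x) b := by
  unfold Qm
  refine Finset.single_le_sum (f := fun x' => if msk S x' = msk S x then p x' b else 0)
    (fun x' _ => by split <;> simp [hp x' b]) (Finset.mem_univ x) |>.trans_eq' ?_
  simp

lemma sum_Qm (p : (Fin k → Bool) → B → ℝ) (S : Finset (Fin k)) (b : B) :
    ∑ y, Qm p S y b = ∑ x, p x b := by
  have := sum_fiber p S b (fun _ => 1)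
  simpa using this

lemma LL_eq (p : (Fin k → Bool) → B → ℝ) (S : Finset (Fin k)) :
    LL p S = ∑ x, ∑ b, p x b * Real.logb 2 (Qm p S (msk S x) b) := by
  unfold LL
  rw [Finset.sum_comm]
  rw [Finset.sum_congr rfl fun b _ => sum_fiber p S b (fun y => Real.logb 2 (Qm p S y b))]
  rw [Finset.sum_comm]

end Shearer2
section Shearer3
variable {B : Type*} [Fintype B] {k : ℕ}

lemma msk_insert (S : Finset (Fin k)) (i : Fin k) (x : Fin k → Bool) :
    msk (insert i S) x = Function.update (msk S x) i (x i) := by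
  funext j
  by_cases hj : j = i
  · subst hj; simp [msk]
  · simp [msk, Function.update_of_ne hj, hj]

lemma Qm_split {p : (Fin k → Bool) → B → ℝ} {S : Finset (Fin k)} {i : Fin k}
    (hi : i ∉ S) {u : Fin k → Bool} (hu : msk (insert i S) u = u) (hui : u i = false) (b : B) :
    Qm p (insert i S) u b + Qm p (insert i S) (Function.update u i true) b
      = Qm p S (msk S u) b := by
  unfold Qm
  rw [← Finset.sum_add_distrib]
  refine Finset.sum_congr rfl fun x _ => ?_
  have hSu : msk S u = msk S (msk (insert i S) u) := by rw [hu]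
  have key : ∀ v : Bool, (msk (insert i S) x = Function.update u i v ↔
      (msk S x = msk S u ∧ x i = v)) := by
    intro v
    constructor
    · intro h
      constructor
      · rw [← msk_msk_of_subset (Finset.subset_insert i S) x, h,
          msk_update_notMem hi, hSu, msk_msk_of_subset (Finset.subset_insert i S)]
      · have := congrFun h i
        rw [msk_insert] at this
        simpa using this
    · rintro ⟨h1, h2⟩
      have hu' : u = Function.update (msk S u) i false := by
        conv_lhs => rw [← hu]
        rw [msk_insert, hui]
      rw [msk_insert, h1, h2, hu', Function.update_idem, msk_update_notMem hi, msk_msk,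
        Finset.inter_self]
  have h0 : msk (insert i S) x = u ↔ (msk S x = msk S u ∧ x i = false) := by
    have := key false
    rwa [show Function.update u i false = u by rw [← hui]; exact Function.update_eq_self i u] at this
  by_cases hx : msk S x = msk S u
  · rcases Bool.dichotomy (x i) with h | h
    · rw [if_pos (h0.mpr ⟨hx, h⟩), if_neg (fun hc => by simpa [h] using ((key true).mp hc).2),
        if_pos hx]
      ring
    · rw [if_neg (fun hc => by simpa [h] using (h0.mp hc).2),
        if_pos ((key true).mpr ⟨hx, h⟩), if_pos hx]
      ring
  · rw [if_neg (fun hc => hx (h0.mp hc).1), if_neg (fun hc => hx ((key true).mp hc).1),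
      if_neg hx]
    ring

end Shearer3
section Shearer4
variable {B : Type*} [Fintype B] {k : ℕ}

lemma pair_fiber {T : Finset (Fin k)} {i : Fin k} (hi : i ∉ T) {z : Fin k → Bool}
    (hz : msk T z = z) :
    Finset.univ.filter (fun y => msk (insert i T) y = y ∧ msk T y = z)
      = {z, Function.update z i true} := by
  have hzi : z i = false := (msk_eq_self_iff T z).mp hz i hi
  ext y
  simp only [Finset.mem_filter, Finset.mem_univ, true_and, Finset.mem_insert,
    Finset.mem_singleton]
  constructor
  · rintro ⟨h1, h2⟩
    have hy : y = Function.update z i (y i) := by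
      funext j
      by_cases hj : j = i
      · subst hj; simp
      · rw [Function.update_of_ne hj]
        by_cases hjT : j ∈ T
        · rw [← h2]; simp [msk, hjT]
        · have hj1 : y j = false := (msk_eq_self_iff _ y).mp h1 j (by simp [hj, hjT])
          have hj2 : z j = false := (msk_eq_self_iff T z).mp hz j hjT
          rw [hj1, hj2]
    rcases Bool.dichotomy (y i) with h | h
    · left; rw [hy, h, ← hzi, Function.update_eq_self]
    · right; rw [hy, h]
  · rintro (rfl | rfl)
    · refine ⟨(msk_eq_self_iff _ y).mpr fun j hj => ?_, hz⟩
      exact (msk_eq_self_iff T y).mp hz j (fun hjT => hj (Finset.mem_insert_of_mem hjT))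
    · constructor
      · refine (msk_eq_self_iff _ _).mpr fun j hj => ?_
        have hji : j ≠ i := fun h => hj (h ▸ Finset.mem_insert_self i T)
        rw [Function.update_of_ne hji]
        exact (msk_eq_self_iff T z).mp hz j (fun hjT => hj (Finset.mem_insert_of_mem hjT))
      · rw [msk_update_notMem hi, hz]

end Shearer4
section Shearer5
variable {B : Type*} [Fintype B] {k : ℕ}

lemma sum_G_le {p : (Fin k → Bool) → B → ℝ} (hp : ∀ x b, 0 ≤ p x b)
    {S T : Finset (Fin k)} {i : Fin k} (hST : S ⊆ T) (hi : i ∉ T) (b : B) :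
    ∑ y, (if msk (insert i T) y = y then
        Qm p T (msk T y) b * Qm p (insert i S) (msk (insert i S) y) b / Qm p S (msk S y) b
      else 0) ≤ ∑ x, p x b := by
  have hiS : i ∉ S := fun h => hi (hST h)
  rw [← sum_Qm p T b, ← Finset.sum_filter]
  rw [← Finset.sum_fiberwise_of_maps_to (g := fun y => msk T y)
      (fun y _ => Finset.mem_univ (msk T y))]
  refine Finset.sum_le_sum fun z _ => ?_
  rw [Finset.filter_filter]
  by_cases hz : msk T z = z
  · rw [pair_fiber hi hz]
    have hzi : z i = false := (msk_eq_self_iff T z).mp hz i hi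
    have hne : z ≠ Function.update z i true := by
      intro h; have := congrFun h i; rw [hzi] at this; simp at this
    rw [Finset.sum_pair hne]
    rw [hz, msk_update_notMem hi, hz, msk_update_notMem hiS,
      msk_update_mem (Finset.mem_insert_self i S)]
    rw [← add_div, ← mul_add]
    have hfix : msk (insert i S) (msk (insert i S) z) = msk (insert i S) z := by
      rw [msk_msk, Finset.inter_self]
    have hui : (msk (insert i S) z) i = false := by
      simp [msk, Finset.mem_insert_self i S, hzi]
    rw [Qm_split hiS hfix hui b, msk_msk_of_subset (Finset.subset_insert i S), mul_div_assoc]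
    exact mul_le_of_le_one_right (Qm_nonneg hp T z b) (div_self_le_one _)
  · have hempty : Finset.univ.filter (fun y => (msk (insert i T) y = y ∧ msk T y = z)) = ∅ := by
      rw [Finset.filter_eq_empty_iff]
      rintro y - ⟨h1, h2⟩
      apply hz
      rw [← h2, msk_msk, Finset.inter_self]
    rw [hempty, Finset.sum_empty]
    exact Qm_nonneg hp T z b

end Shearer5
section Shearer6
variable {B : Type*} [Fintype B] {k : ℕ}

set_option maxHeartbeats 2000000 in
lemma LL_supermodular {p : (Fin k → Bool) → B → ℝ} (hp : ∀ x b, 0 ≤ p x b)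
    {S T : Finset (Fin k)} {i : Fin k} (hST : S ⊆ T) (hi : i ∉ T) :
    LL p (insert i S) + LL p T ≤ LL p (insert i T) + LL p S := by
  have hiS : i ∉ S := fun h => hi (hST h)
  have hSiT : S ⊆ insert i T := hST.trans (Finset.subset_insert i T)
  have hTiT : T ⊆ insert i T := Finset.subset_insert i T
  have hiSiT : insert i S ⊆ insert i T := Finset.insert_subset_insert i hST
  set G : (Fin k → Bool) → B → ℝ := fun y b =>
    Qm p T (msk T y) b * Qm p (insert i S) (msk (insert i S) y) b /
      (Qm p S (msk S y) b * Qm p (insert i T) y b) with hG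
  have key : LL p (insert i S) + LL p T - (LL p (insert i T) + LL p S)
      = ∑ x, ∑ b, p x b * Real.logb 2 (G (msk (insert i T) x) b) := by
    simp only [LL_eq]
    rw [← Finset.sum_add_distrib, ← Finset.sum_add_distrib, ← Finset.sum_sub_distrib]
    refine Finset.sum_congr rfl fun x _ => ?_
    rw [← Finset.sum_add_distrib, ← Finset.sum_add_distrib, ← Finset.sum_sub_distrib]
    refine Finset.sum_congr rfl fun b _ => ?_
    rcases eq_or_lt_of_le (hp x b) with h0 | h0
    · simp [← h0]
    · have hα : 0 < Qm p (insert i T) (msk (insert i T) x) b := h0.trans_le (le_Qm hp _ x b)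
      have hβ : 0 < Qm p T (msk T x) b := h0.trans_le (le_Qm hp _ x b)
      have hγ : 0 < Qm p (insert i S) (msk (insert i S) x) b := h0.trans_le (le_Qm hp _ x b)
      have hδ : 0 < Qm p S (msk S x) b := h0.trans_le (le_Qm hp _ x b)
      rw [hG]
      simp only [msk_msk_of_subset hTiT, msk_msk_of_subset hiSiT, msk_msk_of_subset hSiT,
        msk_msk, Finset.inter_self]
      rw [Real.logb_div (by positivity) (by positivity), Real.logb_mul hβ.ne' hγ.ne',
        Real.logb_mul hδ.ne' hα.ne']
      ring
  have main : ∑ x, ∑ b, p x b * Real.logb 2 (G (msk (insert i T) x) b) ≤ 0 := by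
    rw [Finset.sum_comm]
    rw [Finset.sum_congr rfl fun b _ =>
      (sum_fiber p (insert i T) b (fun y => Real.logb 2 (G y b))).symm]
    refine Finset.sum_nonpos fun b _ => ?_
    have hlog2 : (0:ℝ) < Real.log 2 := Real.log_pos one_lt_two
    have step1 : ∀ y, Qm p (insert i T) y b * Real.logb 2 (G y b)
        ≤ (Qm p (insert i T) y b * G y b - Qm p (insert i T) y b) / Real.log 2 := by
      intro y
      rcases eq_or_ne (Qm p (insert i T) y b) 0 with h0 | h0
      · simp [h0]
      · have hQpos : 0 < Qm p (insert i T) y b :=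
          lt_of_le_of_ne (Qm_nonneg hp _ y b) (Ne.symm h0)
        obtain ⟨x, -, hx⟩ := Finset.exists_ne_zero_of_sum_ne_zero h0
        have hxy : msk (insert i T) x = y := by by_contra h; simp [h] at hx
        have hpx : 0 < p x b := lt_of_le_of_ne (hp x b) (by by_contra h; simp [hxy, ← h] at hx)
        have hβ : 0 < Qm p T (msk T y) b := by
          rw [← hxy, msk_msk_of_subset hTiT]; exact hpx.trans_le (le_Qm hp _ x b)
        have hγ : 0 < Qm p (insert i S) (msk (insert i S) y) b := by
          rw [← hxy, msk_msk_of_subset hiSiT]; exact hpx.trans_le (le_Qm hp _ x b)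
        have hδ : 0 < Qm p S (msk S y) b := by
          rw [← hxy, msk_msk_of_subset hSiT]; exact hpx.trans_le (le_Qm hp _ x b)
        have hGpos : 0 < G y b := by rw [hG]; positivity
        have hle := Real.log_le_sub_one_of_pos hGpos
        calc Qm p (insert i T) y b * Real.logb 2 (G y b)
            = Qm p (insert i T) y b * (Real.log (G y b) / Real.log 2) := by rw [Real.logb]
          _ ≤ Qm p (insert i T) y b * ((G y b - 1) / Real.log 2) := by gcongr
          _ = (Qm p (insert i T) y b * G y b - Qm p (insert i T) y b) / Real.log 2 := by ring
    have step2 : ∀ y, Qm p (insert i T) y b * G y b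
        ≤ (if msk (insert i T) y = y then
            Qm p T (msk T y) b * Qm p (insert i S) (msk (insert i S) y) b / Qm p S (msk S y) b
          else 0) := by
      intro y
      by_cases hy : msk (insert i T) y = y
      · rw [if_pos hy]
        rcases eq_or_ne (Qm p (insert i T) y b) 0 with h0 | h0
        · rw [h0, zero_mul]
          have := Qm_nonneg hp (p := p) T (msk T y) b
          have := Qm_nonneg hp (p := p) (insert i S) (msk (insert i S) y) b
          have := Qm_nonneg hp (p := p) S (msk S y) b
          positivity
        · rw [hG]
          dsimp only
          rw [← div_div, ← mul_div_assoc, mul_div_cancel_left₀ _ h0]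
      · have h0 : Qm p (insert i T) y b = 0 := by
          apply Finset.sum_eq_zero
          intro x _
          have : msk (insert i T) x ≠ y := by
            intro h; apply hy; rw [← h, msk_msk, Finset.inter_self]
          simp [this]
        rw [h0, zero_mul, if_neg hy]
    calc ∑ y, Qm p (insert i T) y b * Real.logb 2 (G y b)
        ≤ ∑ y, (Qm p (insert i T) y b * G y b - Qm p (insert i T) y b) / Real.log 2 :=
          Finset.sum_le_sum fun y _ => step1 y
      _ = ((∑ y, Qm p (insert i T) y b * G y b) - ∑ y, Qm p (insert i T) y b) / Real.log 2 := by
          rw [← Finset.sum_div, Finset.sum_sub_distrib]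
      _ ≤ 0 := by
          apply div_nonpos_of_nonpos_of_nonneg _ hlog2.le
          rw [sub_nonpos, sum_Qm]
          exact (Finset.sum_le_sum fun y _ => step2 y).trans (sum_G_le hp hST hi b)
  linarith [key, main]

end Shearer6
section Shearer7
variable {B : Type*} [Fintype B] {k : ℕ}

lemma LL_shearer {p : (Fin k → Bool) → B → ℝ} (hp : ∀ x b, 0 ≤ p x b) :
    ∑ j : Fin k, LL p (Finset.univ.erase j)
      ≤ ((k : ℝ) - 1) * LL p Finset.univ + LL p ∅ := by
  set F : ℕ → Finset (Fin k) := fun n => Finset.univ.filter (fun m => (m:ℕ) < n) with hF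
  have hstep : ∀ j : Fin k, LL p (F (j.val+1)) + LL p (Finset.univ.erase j)
      ≤ LL p Finset.univ + LL p (F j.val) := by
    intro j
    have h1 : F j.val ⊆ Finset.univ.erase j := by
      intro m hm
      simp only [hF, Finset.mem_filter] at hm
      exact Finset.mem_erase.mpr ⟨fun h => by subst h; omega, Finset.mem_univ m⟩
    have h2 : j ∉ Finset.univ.erase j := fun h => (Finset.mem_erase.mp h).1 rfl
    have h3 : insert j (Finset.univ.erase j) = Finset.univ :=
      Finset.insert_erase (Finset.mem_univ j)
    have h4 : insert j (F j.val) = F (j.val+1) := by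
      ext m
      simp only [hF, Finset.mem_insert, Finset.mem_filter, Finset.mem_univ, true_and]
      constructor
      · rintro (rfl | h) <;> omega
      · intro h
        rcases Nat.lt_or_ge (m : ℕ) (j : ℕ) with h' | h'
        · right; exact h'
        · left; exact Fin.ext (by omega)
    have h5 := LL_supermodular hp h1 h2
    rw [h3, h4] at h5
    linarith
  have tele : ∑ j : Fin k, (LL p (F ((j : ℕ)+1)) - LL p (F (j : ℕ)))
      = LL p Finset.univ - LL p ∅ := by
    rw [Fin.sum_univ_eq_sum_range (fun n => LL p (F (n+1)) - LL p (F n)) k,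
      Finset.sum_range_sub (fun n => LL p (F n))]
    congr 2
    · ext m; simp [hF, m.isLt]
    · ext m; simp [hF]
  have hsum := Finset.sum_le_sum (fun j (_ : j ∈ Finset.univ) => hstep j)
  rw [Finset.sum_add_distrib, Finset.sum_add_distrib, Finset.sum_const, Finset.card_univ,
    Fintype.card_fin, nsmul_eq_mul] at hsum
  rw [Finset.sum_sub_distrib] at tele
  linarith

end Shearer7
section Shearer8
variable {B : Type*} [Fintype B] {k : ℕ}

lemma Qm_univ (p : (Fin k → Bool) → B → ℝ) (y : Fin k → Bool) (b : B) :
    Qm p Finset.univ y b = p y b := by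
  unfold Qm
  have h : ∀ x : Fin k → Bool, msk Finset.univ x = x := fun x =>
    (msk_eq_self_iff _ x).mpr fun i hi => absurd (Finset.mem_univ i) hi
  simp only [h]
  simp

lemma LL_empty (p : (Fin k → Bool) → B → ℝ) :
    LL p ∅ = ∑ b, (∑ x, p x b) * Real.logb 2 (∑ x, p x b) := by
  unfold LL
  rw [Finset.sum_comm]
  refine Finset.sum_congr rfl fun b _ => ?_
  have h : ∀ y, Qm p ∅ y b = if (fun _ : Fin k => false) = y then ∑ x, p x b else 0 := by
    intro y
    unfold Qm
    have h2 : ∀ x : Fin k → Bool, msk ∅ x = fun _ => false := by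
      intro x; funext i; simp [msk]
    simp only [h2]
    split <;> simp
  simp only [h]
  rw [Finset.sum_eq_single (fun _ : Fin k => false)]
  · simp
  · intro y _ hy; rw [if_neg (Ne.symm hy)]; simp
  · simp

lemma Qm_not_fixed {p : (Fin k → Bool) → B → ℝ} {S : Finset (Fin k)} {y : Fin k → Bool}
    (hy : msk S y ≠ y) (b : B) : Qm p S y b = 0 := by
  apply Finset.sum_eq_zero
  intro x _
  have : msk S x ≠ y := fun h => hy (by rw [← h, msk_msk, Finset.inter_self])
  simp [this]

lemma Qm_le_m {p : (Fin k → Bool) → B → ℝ} (hp : ∀ x b, 0 ≤ p x b)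
    (S : Finset (Fin k)) (y : Fin k → Bool) (b : B) : Qm p S y b ≤ ∑ x, p x b := by
  refine Finset.sum_le_sum fun x _ => ?_
  split <;> simp [hp x b]

end Shearer8
section Shearer9
variable {B : Type*} [Fintype B] {k : ℕ}

noncomputable def MI (p : (Fin k → Bool) → B → ℝ) (S : Finset (Fin k)) : ℝ :=
  ∑ y, ∑ b, Qm p S y b *
    Real.logb 2 (Qm p S y b / ((∑ b', Qm p S y b') * (∑ x', p x' b)))

noncomputable def MIfull (p : (Fin k → Bool) → B → ℝ) : ℝ :=
  ∑ x, ∑ b, p x b * Real.logb 2 (p x b / ((∑ b', p x b') * (∑ x', p x' b)))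

lemma logb_two_pow_inv : Real.logb 2 (((2:ℝ) ^ k)⁻¹) = -(k : ℝ) := by
  rw [Real.logb_inv, Real.logb_pow, Real.logb_self_eq_one one_lt_two]
  ring

lemma MIfull_eq {p : (Fin k → Bool) → B → ℝ} (hp : ∀ x b, 0 ≤ p x b)
    (huni : ∀ x, ∑ b, p x b = ((2:ℝ) ^ k)⁻¹) :
    MIfull p = LL p Finset.univ + (k : ℝ) * (∑ x, ∑ b, p x b)
      - ∑ b, (∑ x, p x b) * Real.logb 2 (∑ x, p x b) := by
  have hpt : ∀ (x : Fin k → Bool) (b : B),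
      p x b * Real.logb 2 (p x b / ((∑ b', p x b') * (∑ x', p x' b)))
        = p x b * Real.logb 2 (p x b) + (k : ℝ) * p x b
          - p x b * Real.logb 2 (∑ x', p x' b) := by
    intro x b
    rcases eq_or_lt_of_le (hp x b) with h0 | h0
    · simp [← h0]
    · have hm : 0 < ∑ x', p x' b :=
        h0.trans_le (Finset.single_le_sum (fun x' _ => hp x' b) (Finset.mem_univ x))
      have h2k : (0:ℝ) < ((2:ℝ) ^ k)⁻¹ := by positivity
      rw [huni x, Real.logb_div h0.ne' (by positivity), Real.logb_mul h2k.ne' hm.ne',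
        logb_two_pow_inv]
      ring
  unfold MIfull
  simp only [hpt]
  rw [Finset.sum_congr rfl fun x (_ : x ∈ Finset.univ) =>
    (Finset.sum_sub_distrib (s := Finset.univ)
      (f := fun b => p x b * Real.logb 2 (p x b) + (k:ℝ) * p x b)
      (g := fun b => p x b * Real.logb 2 (∑ x', p x' b))),
    Finset.sum_sub_distrib]
  congr 1
  · rw [Finset.sum_congr rfl fun x (_ : x ∈ Finset.univ) => Finset.sum_add_distrib,
      Finset.sum_add_distrib]
    congr 1
    · rw [LL_eq]
      refine Finset.sum_congr rfl fun x _ => Finset.sum_congr rfl fun b _ => ?_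
      have hfix : msk Finset.univ x = x :=
        (msk_eq_self_iff _ x).mpr fun i hi => absurd (Finset.mem_univ i) hi
      rw [hfix, Qm_univ]
    · rw [Finset.mul_sum]
      exact Finset.sum_congr rfl fun x _ => by rw [Finset.mul_sum]
  · rw [Finset.sum_comm]
    exact Finset.sum_congr rfl fun b _ => by rw [← Finset.sum_mul]

end Shearer9
section Shearer10
variable {B : Type*} [Fintype B] {k : ℕ}

lemma msk_univ (x : Fin k → Bool) : msk Finset.univ x = x :=
  (msk_eq_self_iff _ x).mpr fun i hi => absurd (Finset.mem_univ i) hi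

lemma MI_erase {p : (Fin k → Bool) → B → ℝ} (hp : ∀ x b, 0 ≤ p x b)
    (huni : ∀ x, ∑ b, p x b = ((2:ℝ) ^ k)⁻¹) (j : Fin k) :
    MI p (Finset.univ.erase j) = LL p (Finset.univ.erase j)
      + ((k : ℝ) - 1) * (∑ x, ∑ b, p x b)
      - ∑ b, (∑ x, p x b) * Real.logb 2 (∑ x, p x b) := by
  set S := Finset.univ.erase j with hS
  have hjS : j ∉ S := Finset.notMem_erase j _
  have hpt : ∀ (y : Fin k → Bool) (b : B),
      Qm p S y b * Real.logb 2 (Qm p S y b / ((∑ b', Qm p S y b') * (∑ x', p x' b)))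
        = Qm p S y b * Real.logb 2 (Qm p S y b) + ((k : ℝ) - 1) * Qm p S y b
          - Qm p S y b * Real.logb 2 (∑ x', p x' b) := by
    intro y b
    rcases eq_or_ne (Qm p S y b) 0 with h0 | h0
    · simp [h0]
    · have hQpos : 0 < Qm p S y b := lt_of_le_of_ne (Qm_nonneg hp _ y b) (Ne.symm h0)
      have hfix : msk S y = y := by
        by_contra h
        exact h0 (Qm_not_fixed h b)
      have hyj : y j = false := (msk_eq_self_iff S y).mp hfix j hjS
      have hm : 0 < ∑ x', p x' b := hQpos.trans_le (Qm_le_m hp S y b)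
      have hu : msk (insert j S) y = y := by
        rw [hS, Finset.insert_erase (Finset.mem_univ j)]
        exact msk_univ y
      have hsplit : ∀ b', Qm p S y b' = p y b' + p (Function.update y j true) b' := by
        intro b'
        have h := Qm_split (p := p) hjS hu hyj b'
        rw [hS, Finset.insert_erase (Finset.mem_univ j)] at h
        rw [Qm_univ, Qm_univ, ← hS, hfix] at h
        exact h.symm
      have hQA : ∑ b', Qm p S y b' = 2 * ((2:ℝ) ^ k)⁻¹ := by
        simp only [hsplit]
        rw [Finset.sum_add_distrib, huni y, huni (Function.update y j true)]
        ring
      have h2k : (0:ℝ) < ((2:ℝ) ^ k)⁻¹ := by positivity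
      rw [hQA, Real.logb_div h0 (by positivity),
        Real.logb_mul (by positivity) hm.ne',
        Real.logb_mul (by norm_num) h2k.ne', logb_two_pow_inv,
        Real.logb_self_eq_one one_lt_two]
      ring
  unfold MI
  simp only [hpt]
  rw [Finset.sum_congr rfl fun y (_ : y ∈ Finset.univ) =>
    (Finset.sum_sub_distrib (s := Finset.univ)
      (f := fun b => Qm p S y b * Real.logb 2 (Qm p S y b) + ((k:ℝ) - 1) * Qm p S y b)
      (g := fun b => Qm p S y b * Real.logb 2 (∑ x', p x' b))),
    Finset.sum_sub_distrib]
  congr 1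
  · rw [Finset.sum_congr rfl fun y (_ : y ∈ Finset.univ) => Finset.sum_add_distrib,
      Finset.sum_add_distrib]
    congr 1
    rw [Finset.sum_comm]
    rw [Finset.sum_congr rfl fun b (_ : b ∈ Finset.univ) =>
      (by rw [← Finset.mul_sum, sum_Qm] :
        ∑ y, ((k:ℝ) - 1) * Qm p S y b = ((k:ℝ)-1) * ∑ x, p x b)]
    rw [← Finset.mul_sum, Finset.sum_comm (s := (Finset.univ : Finset B)), Finset.mul_sum]
  · rw [Finset.sum_comm]
    refine Finset.sum_congr rfl fun b _ => ?_
    rw [← Finset.sum_mul, sum_Qm]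

end Shearer10

theorem stmt_11 {B : Type*} [Fintype B] (k : ℕ) (hk : 0 < k)
    (p : (Fin k → Bool) → B → ℝ) (hp : ∀ x b, 0 ≤ p x b)
    (hsum : ∑ x, ∑ b, p x b = 1)
    (huni : ∀ x, ∑ b, p x b = ((2:ℝ) ^ k)⁻¹) :
    ∃ S : Finset (Fin k), S.card = k - 1 ∧
      (∑ y : Fin k → Bool, ∑ b,
          (∑ x, if (fun i => if i ∈ S then x i else false) = y then p x b else 0) *
            Real.logb 2
              ((∑ x, if (fun i => if i ∈ S then x i else false) = y then p x b else 0) /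
                ((∑ b', ∑ x, if (fun i => if i ∈ S then x i else false) = y then p x b'
                    else 0) *
                  (∑ x', p x' b)))) ≤
        ((k : ℝ) - 1) / k *
          ∑ x, ∑ b, p x b *
            Real.logb 2 (p x b / ((∑ b', p x b') * (∑ x', p x' b))) := by
  set M : ℝ := ∑ b, (∑ x, p x b) * Real.logb 2 (∑ x, p x b) with hMdef
  have hM : MIfull p = LL p Finset.univ + (k:ℝ) - M := by
    rw [MIfull_eq hp huni, hsum, mul_one]
  have hshear := LL_shearer (p := p) hp
  rw [LL_empty] at hshear
  have hsumMI : ∑ j : Fin k, MI p (Finset.univ.erase j) ≤ ((k:ℝ) - 1) * MIfull p := by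
    have eq1 : ∑ j : Fin k, MI p (Finset.univ.erase j)
        = (∑ j : Fin k, LL p (Finset.univ.erase j)) + (k:ℝ) * (((k:ℝ) - 1) - M) := by
      rw [Finset.sum_congr rfl fun j (_ : j ∈ Finset.univ) => MI_erase hp huni j]
      simp only [hsum, mul_one]
      rw [Finset.sum_sub_distrib, Finset.sum_add_distrib, Finset.sum_const, Finset.sum_const,
        Finset.card_univ, Fintype.card_fin, nsmul_eq_mul, nsmul_eq_mul]
      ring
    calc ∑ j : Fin k, MI p (Finset.univ.erase j)
        = (∑ j : Fin k, LL p (Finset.univ.erase j)) + (k:ℝ) * (((k:ℝ) - 1) - M) := eq1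
      _ ≤ (((k:ℝ) - 1) * LL p Finset.univ + M) + (k:ℝ) * (((k:ℝ) - 1) - M) := by linarith
      _ = ((k:ℝ) - 1) * MIfull p := by rw [hM]; ring
  have hk' : (0:ℝ) < (k:ℝ) := by exact_mod_cast hk
  have : Nonempty (Fin k) := ⟨⟨0, hk⟩⟩
  have hconst : ∑ _j : Fin k, ((k:ℝ) - 1) / k * MIfull p = ((k:ℝ) - 1) * MIfull p := by
    rw [Finset.sum_const, Finset.card_univ, Fintype.card_fin, nsmul_eq_mul]
    field_simp
  obtain ⟨j, -, hj⟩ := Finset.exists_le_of_sum_le Finset.univ_nonempty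
    (hsumMI.trans_eq hconst.symm)
  refine ⟨Finset.univ.erase j, ?_, ?_⟩
  · rw [Finset.card_erase_of_mem (Finset.mem_univ j), Finset.card_univ, Fintype.card_fin]
  · exact hj
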